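/- Let H, Q₁,…,Q_m be mutually commuting Hermitian d×d matrices and λ₀,λ₁,…,λ_m ∈ ℝ, and let γ := exp(−λ₀H − Σ_{ℓ=1}^m λ_ℓ Q_ℓ) / Tr[exp(−λ₀H − Σ_{ℓ=1}^m λ_ℓ Q_ℓ)] be the associated generalized Gibbs ensemble on ℂ^d. Let (ρ_n)_n, with ρ_n a density matrix on (ℂ^d)^⊗n, be weakly almost i.i.d. along γ. Define H̄_n := (1/n) Σ_{i=1}^n H^(i) and Q̄_{ℓ,n} := (1/n) Σ_{i=1}^n Q_ℓ^(i). Then for every δ > 0, Tr[ρ_n · {|H̄_n − Tr(γH)·1_n| ≤ δ} · ∏_{ℓ=1}^m {|Q̄_{ℓ,n} − Tr(γQ_ℓ)·1_n| ≤ δ}] → 1 as n → ∞. -/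

import Mathlib

open scoped BigOperators ComplexOrder
open Matrix Filter

noncomputable section

/-- Square matrices on `ℂ^d`. -/
abbrev Mat (d : ℕ) := Matrix (Fin d) (Fin d) ℂ

/-- Operators on the `n`-fold tensor power `(ℂ^d)^⊗n`, identified with matrices indexed by
`Fin n → Fin d`. -/
abbrev MatN (d n : ℕ) := Matrix (Fin n → Fin d) (Fin n → Fin d) ℂ

/-- A density matrix: positive semidefinite with unit trace. -/
def IsDensity {m : Type*} [Fintype m] [DecidableEq m] (ρ : Matrix m m ℂ) : Prop :=
  ρ.PosSemidef ∧ ρ.trace = 1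

/-- The trace norm `‖X‖₁ = Tr √(XᴴX)`. -/
noncomputable def traceNorm {m : Type*} [Fintype m] [DecidableEq m] (X : Matrix m m ℂ) : ℝ :=
  (((Matrix.posSemidef_conjTranspose_mul_self X).1.eigenvectorUnitary : Matrix m m ℂ) *
    Matrix.diagonal (fun i => ((Real.sqrt ((Matrix.posSemidef_conjTranspose_mul_self X).1.eigenvalues i) : ℝ) : ℂ)) *
    star ((Matrix.posSemidef_conjTranspose_mul_self X).1.eigenvectorUnitary : Matrix m m ℂ)).trace.re

/-- The `n`-fold tensor power `ρ^⊗n`. -/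
def tpow {d : ℕ} (ρ : Mat d) (n : ℕ) : MatN d n := fun x y => ∏ i, ρ (x i) (y i)

/-- The tensor power of `ρ` over the sites in `I ⊆ [n]`. -/
def tpowOn {d n : ℕ} (ρ : Mat d) (I : Finset (Fin n)) :
    Matrix ((i : I) → Fin d) ((i : I) → Fin d) ℂ := fun x y => ∏ i, ρ (x i) (y i)

/-- Combine a configuration on `I` with a configuration on its complement. -/
def combine {α : Type*} {n : ℕ} (I : Finset (Fin n)) (x : (i : I) → α)
    (c : (j : {j : Fin n // j ∉ I}) → α) : Fin n → α :=
  fun j => if h : j ∈ I then x ⟨j, h⟩ else c ⟨j, h⟩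

/-- The marginal (partial trace over the sites outside `I`) of a state on `(ℂ^d)^⊗n`. -/
noncomputable def marginal {d n : ℕ} (ρn : MatN d n) (I : Finset (Fin n)) :
    Matrix ((i : I) → Fin d) ((i : I) → Fin d) ℂ :=
  fun x y => ∑ c : (j : {j : Fin n // j ∉ I}) → Fin d, ρn (combine I x c) (combine I y c)

/-- A sequence of states `ρ_n` on `(ℂ^d)^⊗n` is weakly almost i.i.d. along `ρ` if for each
fixed `k ≥ 1` the average over all `k`-element subsets `I ⊆ [n]` of
`‖(ρ_n)_I − ρ^⊗k‖₁` tends to `0` as `n → ∞`. -/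
def WeaklyAlmostIID {d : ℕ} (ρ : Mat d) (ρseq : ∀ n, MatN d n) : Prop :=
  ∀ k : ℕ, 0 < k →
    Tendsto (fun n : ℕ =>
        (∑ I ∈ Finset.powersetCard k (Finset.univ : Finset (Fin n)),
          traceNorm (marginal (ρseq n) I - tpowOn ρ I)) / (n.choose k : ℝ))
      atTop (nhds 0)

/-- `A^(i) = 1 ⊗ ⋯ ⊗ A ⊗ ⋯ ⊗ 1` with `A` in the `i`-th tensor factor. -/
def embedAt {d : ℕ} (n : ℕ) (A : Mat d) (i : Fin n) : MatN d n :=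
  fun x y => if ∀ j, j ≠ i → x j = y j then A (x i) (y i) else 0

/-- The empirical average `Ā_n = (1/n) Σ_i A^(i)`. -/
noncomputable def avgObs {d : ℕ} (n : ℕ) (A : Mat d) : MatN d n :=
  (n : ℂ)⁻¹ • ∑ i : Fin n, embedAt n A i

open Classical in
/-- The spectral projection of a Hermitian matrix `Q` onto the span of eigenvectors whose
eigenvalue satisfies the predicate `S` (junk value `0` if `Q` is not Hermitian). -/
noncomputable def specProj {m : Type*} [Fintype m] [DecidableEq m]
    (S : ℝ → Prop) (Q : Matrix m m ℂ) : Matrix m m ℂ :=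
  if hQ : Q.IsHermitian then
    (hQ.eigenvectorUnitary : Matrix m m ℂ) *
      Matrix.diagonal (fun i => if S (hQ.eigenvalues i) then (1 : ℂ) else 0) *
      star (hQ.eigenvectorUnitary : Matrix m m ℂ)
  else 0

open Classical in
/-- Functional calculus for a Hermitian matrix (junk value `0` if not Hermitian). -/
noncomputable def mfun {m : Type*} [Fintype m] [DecidableEq m]
    (f : ℝ → ℝ) (Q : Matrix m m ℂ) : Matrix m m ℂ :=
  if hQ : Q.IsHermitian then
    (hQ.eigenvectorUnitary : Matrix m m ℂ) *
      Matrix.diagonal (fun i => (f (hQ.eigenvalues i) : ℂ)) *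
      star (hQ.eigenvectorUnitary : Matrix m m ℂ)
  else 0

/-- The matrix logarithm (base 2) via functional calculus. -/
noncomputable def matLog {m : Type*} [Fintype m] [DecidableEq m] (Q : Matrix m m ℂ) :
    Matrix m m ℂ := mfun (Real.logb 2) Q

/-- The von Neumann entropy `S(ρ) = −Tr(ρ log ρ)` (base-2 logarithm, on the support). -/
noncomputable def vN {m : Type*} [Fintype m] [DecidableEq m] (ρ : Matrix m m ℂ) : ℝ :=
  -(Matrix.trace (ρ * matLog ρ)).re

/-- The operator norm `‖A‖_∞`. -/
noncomputable def opNorm {m : Type*} [Fintype m] [DecidableEq m] (A : Matrix m m ℂ) : ℝ :=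
  ‖Matrix.toEuclideanCLM (𝕜 := ℂ) A‖


end

noncomputable section SpecHelpers

namespace SH

variable {ι : Type*} [Fintype ι] [DecidableEq ι]

/-- `U diag(g ∘ eig) U*` for a Hermitian matrix. -/
def fn (g : ℝ → ℂ) {M : Matrix ι ι ℂ} (hM : M.IsHermitian) : Matrix ι ι ℂ :=
  (hM.eigenvectorUnitary : Matrix ι ι ℂ) *
    Matrix.diagonal (g ∘ hM.eigenvalues) *
    star (hM.eigenvectorUnitary : Matrix ι ι ℂ)

variable {M N : Matrix ι ι ℂ} (hM : M.IsHermitian)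

lemma star_mul_self_unitary :
    star (hM.eigenvectorUnitary : Matrix ι ι ℂ) * (hM.eigenvectorUnitary : Matrix ι ι ℂ) = 1 :=
  Unitary.coe_star_mul_self hM.eigenvectorUnitary

lemma mul_star_self_unitary :
    (hM.eigenvectorUnitary : Matrix ι ι ℂ) * star (hM.eigenvectorUnitary : Matrix ι ι ℂ) = 1 :=
  Unitary.coe_mul_star_self hM.eigenvectorUnitary

lemma sandwich_mul {U A B : Matrix ι ι ℂ} (hU : star U * U = 1) :
    (U * A * star U) * (U * B * star U) = U * (A * B) * star U := by
  calc (U * A * star U) * (U * B * star U)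
      = U * (A * (star U * U) * B) * star U := by noncomm_ring
    _ = U * (A * B) * star U := by rw [hU, mul_one]

lemma fn_mul_fn (g h : ℝ → ℂ) : fn g hM * fn h hM = fn (g * h) hM := by
  unfold fn
  rw [sandwich_mul (star_mul_self_unitary hM), Matrix.diagonal_mul_diagonal]
  rfl

lemma fn_congr {g h : ℝ → ℂ} (hgh : ∀ t, g t = h t) : fn g hM = fn h hM := by
  have : g = h := funext hgh
  rw [this]

lemma fn_eq_self : M = fn (fun t => (t : ℂ)) hM := by
  simpa [fn] using hM.spectral_theorem

lemma fn_one : fn (fun _ => (1:ℂ)) hM = 1 := by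
  unfold fn
  have h1 : ((fun _ => (1:ℂ)) ∘ hM.eigenvalues) = fun _ => (1:ℂ) := rfl
  rw [h1, Matrix.diagonal_one, mul_one, mul_star_self_unitary hM]

lemma fn_add (g h : ℝ → ℂ) : fn g hM + fn h hM = fn (g + h) hM := by
  unfold fn
  rw [← add_mul, ← mul_add, Matrix.diagonal_add]
  rfl

lemma fn_smul (c : ℂ) (g : ℝ → ℂ) : c • fn g hM = fn (fun t => c * g t) hM := by
  unfold fn
  have h1 : Matrix.diagonal ((fun t => c * g t) ∘ hM.eigenvalues)
      = c • Matrix.diagonal (g ∘ hM.eigenvalues) := by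
    rw [← Matrix.diagonal_smul]
    rfl
  rw [h1, Matrix.mul_smul, Matrix.smul_mul]

lemma fn_sub (g h : ℝ → ℂ) : fn g hM - fn h hM = fn (g - h) hM := by
  unfold fn
  rw [← sub_mul, ← mul_sub]
  congr 2
  ext i j
  by_cases h' : i = j <;> simp [Matrix.diagonal, h']

lemma fn_conjTranspose (g : ℝ → ℂ) : (fn g hM)ᴴ = fn (fun t => star (g t)) hM := by
  unfold fn
  rw [Matrix.conjTranspose_mul, Matrix.conjTranspose_mul, Matrix.diagonal_conjTranspose]
  rw [← Matrix.star_eq_conjTranspose, ← Matrix.star_eq_conjTranspose, star_star, mul_assoc]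
  rfl

lemma fn_isHermitian {g : ℝ → ℂ} (hg : ∀ t, star (g t) = g t) : (fn g hM).IsHermitian := by
  unfold Matrix.IsHermitian
  rw [fn_conjTranspose]
  simp only [hg]

lemma fn_posSemidef {g : ℝ → ℂ} (hg : ∀ t, 0 ≤ g t) : (fn g hM).PosSemidef := by
  unfold fn
  rw [show star (hM.eigenvectorUnitary : Matrix ι ι ℂ)
      = (hM.eigenvectorUnitary : Matrix ι ι ℂ)ᴴ from rfl]
  exact (Matrix.posSemidef_diagonal_iff.mpr fun i => hg _).mul_mul_conjTranspose_same _

lemma fn_trace (g : ℝ → ℂ) : (fn g hM).trace = ∑ i, g (hM.eigenvalues i) := by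
  unfold fn
  rw [Matrix.trace_mul_comm, ← mul_assoc, star_mul_self_unitary hM, one_mul,
    Matrix.trace_diagonal]
  rfl

open Classical in
lemma specProj_eq_fn (S : ℝ → Prop) :
    specProj S M = fn (fun t => if S t then (1:ℂ) else 0) hM := by
  unfold specProj fn
  rw [dif_pos hM]
  rfl

lemma mfun_eq_fn (f : ℝ → ℝ) : mfun f M = fn (fun t => (f t : ℂ)) hM := by
  unfold mfun fn
  rw [dif_pos hM]
  rfl

/-- anything commuting with `M` commutes with `fn g hM`. -/
lemma commute_fn (h : Commute M N) (g : ℝ → ℂ) : Commute (fn g hM) N := by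
  set U : Matrix ι ι ℂ := (hM.eigenvectorUnitary : Matrix ι ι ℂ) with hU
  have hUs : star U * U = 1 := star_mul_self_unitary hM
  have hsU : U * star U = 1 := mul_star_self_unitary hM
  set D : Matrix ι ι ℂ := Matrix.diagonal ((fun (t:ℝ) => (t:ℂ)) ∘ hM.eigenvalues) with hD
  set Nt : Matrix ι ι ℂ := star U * N * U with hNt
  have cancel : ∀ X Y : Matrix ι ι ℂ, U * X * star U = U * Y * star U → X = Y := by
    intro X Y hXY
    calc X = (star U * U) * X * (star U * U) := by rw [hUs]; simp
      _ = star U * (U * X * star U) * U := by noncomm_ring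
      _ = star U * (U * Y * star U) * U := by rw [hXY]
      _ = (star U * U) * Y * (star U * U) := by noncomm_ring
      _ = Y := by rw [hUs]; simp
  have h2 : M = U * D * star U := fn_eq_self hM
  have hNrec : N = U * Nt * star U := by
    rw [hNt]
    calc N = (U * star U) * N * (U * star U) := by rw [hsU]; simp
      _ = U * (star U * N * U) * star U := by noncomm_ring
  have e1 : U * (D * Nt) * star U = M * N := by rw [← sandwich_mul hUs, ← h2, ← hNrec]
  have e2 : U * (Nt * D) * star U = N * M := by rw [← sandwich_mul hUs, ← h2, ← hNrec]
  have hDN : D * Nt = Nt * D := cancel _ _ (by rw [e1, e2, h.eq])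
  have key : ∀ i j, Nt i j * g (hM.eigenvalues j) = g (hM.eigenvalues i) * Nt i j := by
    intro i j
    have h5 := congrFun (congrFun hDN i) j
    simp only [hD, Matrix.diagonal_mul, Matrix.mul_diagonal, Function.comp_apply] at h5
    by_cases hij : hM.eigenvalues i = hM.eigenvalues j
    · rw [hij, mul_comm]
    · have hz : Nt i j = 0 := by
        have h0 : ((hM.eigenvalues i : ℂ) - hM.eigenvalues j) * Nt i j = 0 := by
          linear_combination h5
        rcases mul_eq_zero.mp h0 with h' | h'
        · exact absurd (by exact_mod_cast sub_eq_zero.mp h') hij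
        · exact h'
      simp [hz]
  have hdg : Matrix.diagonal (g ∘ hM.eigenvalues) * Nt
      = Nt * Matrix.diagonal (g ∘ hM.eigenvalues) := by
    ext i j
    simp only [Matrix.diagonal_mul, Matrix.mul_diagonal, Function.comp_apply]
    exact (key i j).symm
  show fn g hM * N = N * fn g hM
  conv_lhs => rw [hNrec]
  conv_rhs => rw [hNrec]
  unfold fn
  rw [sandwich_mul hUs, sandwich_mul hUs, hdg]

end SH

end SpecHelpers
namespace SH

variable {ι : Type*} [Fintype ι] [DecidableEq ι]

lemma psd_diag_nonneg {P : Matrix ι ι ℂ} (hP : P.PosSemidef) (i : ι) : 0 ≤ P i i := by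
  exact hP.diag_nonneg

lemma psd_trace_nonneg {P : Matrix ι ι ℂ} (hP : P.PosSemidef) : 0 ≤ P.trace :=
  Finset.sum_nonneg fun i _ => psd_diag_nonneg hP i

lemma psd_trace_re_nonneg {P : Matrix ι ι ℂ} (hP : P.PosSemidef) : 0 ≤ P.trace.re :=
  (Complex.le_def.mp (psd_trace_nonneg hP)).1

lemma trace_mul_psd_re_nonneg {X Y : Matrix ι ι ℂ} (hX : X.PosSemidef) (hY : Y.PosSemidef) :
    0 ≤ (X * Y).trace.re := by
  obtain ⟨S, hSps, hSS⟩ : ∃ S : Matrix ι ι ℂ, S.PosSemidef ∧ S * S = X :=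
    ⟨fn (fun t => ((Real.sqrt t : ℝ) : ℂ)) hX.1,
      fn_posSemidef hX.1 fun t => Complex.zero_le_real.mpr (Real.sqrt_nonneg t), by
        rw [fn_mul_fn]
        conv_rhs => rw [fn_eq_self hX.1]
        unfold fn
        congr 3
        funext i
        simp only [Function.comp_apply, Pi.mul_apply]
        rw [← Complex.ofReal_mul, Real.mul_self_sqrt (hX.eigenvalues_nonneg i)]⟩
  have h1 : (X * Y).trace = (S * Y * Sᴴ).trace := by
    rw [hSps.1.eq, ← hSS, Matrix.mul_assoc, Matrix.trace_mul_comm S (S * Y)]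
  rw [h1]
  exact psd_trace_re_nonneg (hY.mul_mul_conjTranspose_same _)

lemma psd_of_proj {P : Matrix ι ι ℂ} (hP : P.IsHermitian) (hidem : P * P = P) :
    P.PosSemidef := by
  have h := Matrix.posSemidef_conjTranspose_mul_self P
  rwa [hP.eq, hidem] at h

lemma one_sub_proj {P : Matrix ι ι ℂ} (hP : P.IsHermitian) (hidem : P * P = P) :
    ((1 : Matrix ι ι ℂ) - P).IsHermitian ∧
      ((1 : Matrix ι ι ℂ) - P) * ((1 : Matrix ι ι ℂ) - P) = (1 : Matrix ι ι ℂ) - P := by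
  constructor
  · exact Matrix.isHermitian_one.sub hP
  · have : ((1 : Matrix ι ι ℂ) - P) * ((1 : Matrix ι ι ℂ) - P) = 1 - P - P + P * P := by
      noncomm_ring
    rw [this, hidem]; noncomm_ring

lemma fn_ofReal_eq_cfc {M : Matrix ι ι ℂ} (hM : M.IsHermitian) (f : ℝ → ℝ) :
    fn (fun t => ((f t : ℝ) : ℂ)) hM = cfc f M := by
  rw [hM.cfc_eq f]
  unfold fn Matrix.IsHermitian.cfc
  rw [Unitary.conjStarAlgAut_apply]
  rfl

/-- trace norm of a Hermitian matrix is the sum of abs of eigenvalues -/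
lemma traceNorm_herm {σ : Matrix ι ι ℂ} (hσ : σ.IsHermitian) :
    traceNorm σ = ∑ i, |hσ.eigenvalues i| := by
  have hfnpsd : (fn (fun t => ((|t| : ℝ) : ℂ)) hσ).PosSemidef :=
    fn_posSemidef hσ fun t => by
      rw [Complex.zero_le_real]; exact abs_nonneg t
  have hsq : (fn (fun t => ((|t| : ℝ) : ℂ)) hσ) ^ 2 = σᴴ * σ := by
    rw [pow_two, fn_mul_fn]
    rw [hσ.eq]
    conv_rhs => rw [fn_eq_self hσ]
    rw [fn_mul_fn]
    have hfun : ((fun t : ℝ => ((|t| : ℝ) : ℂ)) * (fun t : ℝ => ((|t| : ℝ) : ℂ)))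
        = (fun t : ℝ => (t : ℂ)) * (fun t : ℝ => (t : ℂ)) := by
      funext t
      show ((|t| : ℝ) : ℂ) * ((|t| : ℝ) : ℂ) = (t : ℂ) * (t : ℂ)
      rw [← Complex.ofReal_mul, ← Complex.ofReal_mul, abs_mul_abs_self]
    rw [hfun]
  have hkey : fn (fun t => ((Real.sqrt t : ℝ) : ℂ)) (Matrix.posSemidef_conjTranspose_mul_self σ).1
      = fn (fun t => ((|t| : ℝ) : ℂ)) hσ := by
    have hsa : IsSelfAdjoint σ := hσ.isSelfAdjoint
    rw [fn_ofReal_eq_cfc, fn_ofReal_eq_cfc, hσ.eq]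
    have hsq' : σ * σ = cfc (fun t : ℝ => t * t) σ := by
      rw [cfc_mul (fun t : ℝ => t) (fun t : ℝ => t) σ, cfc_id' ℝ σ]
    rw [hsq', ← cfc_comp Real.sqrt (fun t : ℝ => t * t) σ]
    congr 1
    funext t
    exact Real.sqrt_mul_self_eq_abs t
  unfold traceNorm
  show (fn (fun t => ((Real.sqrt t : ℝ) : ℂ)) (Matrix.posSemidef_conjTranspose_mul_self σ).1).trace.re = _
  rw [hkey, fn_trace, ← Complex.ofReal_sum, Complex.ofReal_re]

lemma traceNorm_nonneg' (X : Matrix ι ι ℂ) : 0 ≤ traceNorm X := by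
  show 0 ≤ (fn (fun t => ((Real.sqrt t : ℝ) : ℂ)) (Matrix.posSemidef_conjTranspose_mul_self X).1).trace.re
  exact psd_trace_re_nonneg (fn_posSemidef _ fun t => Complex.zero_le_real.mpr (Real.sqrt_nonneg t))

/-- entries of a unitary have modulus at most one -/
lemma unitary_entry_le_one {M : Matrix ι ι ℂ} (hM : M.IsHermitian) (x i : ι) :
    ‖(hM.eigenvectorUnitary : Matrix ι ι ℂ) x i‖ ≤ 1 := by
  set U : Matrix ι ι ℂ := (hM.eigenvectorUnitary : Matrix ι ι ℂ)
  have hUs : star U * U = 1 := star_mul_self_unitary hM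
  have h1 : (star U * U) i i = 1 := by rw [hUs]; simp [Matrix.one_apply]
  have h2 : ∑ z, Complex.normSq (U z i) = 1 := by
    have : (star U * U) i i = ∑ z, (Complex.normSq (U z i) : ℂ) := by
      rw [Matrix.mul_apply]
      congr 1
      funext z
      rw [Matrix.star_apply]
      rw [show star (U z i) = (starRingEnd ℂ) (U z i) from rfl, mul_comm,
        Complex.mul_conj]
    rw [this] at h1
    have := congrArg Complex.re h1
    simpa [← Complex.ofReal_sum] using this
  have h3 : Complex.normSq (U x i) ≤ 1 := by
    rw [← h2]
    exact Finset.single_le_sum (f := fun z => Complex.normSq (U z i))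
      (fun z _ => Complex.normSq_nonneg _) (Finset.mem_univ x)
  rw [Complex.norm_def]
  rw [show (1:ℝ) = Real.sqrt 1 by simp]
  exact Real.sqrt_le_sqrt h3

lemma entry_abs_le_traceNorm {σ : Matrix ι ι ℂ} (hσ : σ.IsHermitian) (x y : ι) :
    ‖σ x y‖ ≤ traceNorm σ := by
  set U : Matrix ι ι ℂ := (hσ.eigenvectorUnitary : Matrix ι ι ℂ) with hU
  have hentry : σ x y = ∑ k, U x k * (hσ.eigenvalues k : ℂ) * star (U y k) := by
    conv_lhs => rw [fn_eq_self hσ]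
    unfold fn
    rw [Matrix.mul_apply]
    congr 1
    funext k
    rw [Matrix.mul_diagonal, Matrix.star_apply]
    rfl
  rw [hentry, traceNorm_herm hσ]
  refine le_trans (norm_sum_le _ _) ?_
  apply Finset.sum_le_sum
  intro k _
  rw [norm_mul, norm_mul]
  have h1 := unitary_entry_le_one hσ x k
  have h2 : ‖star (U y k)‖ ≤ 1 := by
    rw [show star (U y k) = (starRingEnd ℂ) (U y k) from rfl, Complex.norm_conj]
    exact unitary_entry_le_one hσ y k
  have h3 : ‖(hσ.eigenvalues k : ℂ)‖ = |hσ.eigenvalues k| := Complex.norm_real _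
  calc ‖U x k‖ * ‖(hσ.eigenvalues k : ℂ)‖ * ‖star (U y k)‖
      ≤ 1 * |hσ.eigenvalues k| * 1 := by
        apply mul_le_mul (mul_le_mul h1 (le_of_eq h3) (norm_nonneg _) zero_le_one) h2
          (norm_nonneg _)
        positivity
    _ = |hσ.eigenvalues k| := by ring

end SH
namespace SH

variable {ι : Type*} [Fintype ι] [DecidableEq ι]

open Classical in
lemma specProj_isHermitian {M : Matrix ι ι ℂ} (hM : M.IsHermitian) (S : ℝ → Prop) :
    (specProj S M).IsHermitian := by
  rw [specProj_eq_fn hM S]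
  exact fn_isHermitian hM fun t => by by_cases h : S t <;> simp [h]

open Classical in
lemma specProj_idem {M : Matrix ι ι ℂ} (hM : M.IsHermitian) (S : ℝ → Prop) :
    specProj S M * specProj S M = specProj S M := by
  rw [specProj_eq_fn hM S, fn_mul_fn]
  exact fn_congr hM fun t => by
    show (if S t then (1:ℂ) else 0) * (if S t then (1:ℂ) else 0) = _
    by_cases h : S t <;> simp [h]

open Classical in
lemma commute_specProj {M N : Matrix ι ι ℂ} (hM : M.IsHermitian) (h : Commute M N)
    (S : ℝ → Prop) : Commute (specProj S M) N := by
  rw [specProj_eq_fn hM S]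
  exact commute_fn hM h _

/-- Chebyshev: `(δ²)⁻¹ M² + P_{|·|≤δ} - 1` is PSD. -/
lemma cheb_psd {M : Matrix ι ι ℂ} (hM : M.IsHermitian) {δ : ℝ} (hδ : 0 < δ) :
    ((((δ ^ 2)⁻¹ : ℝ) : ℂ) • (M * M) + specProj (fun t => |t| ≤ δ) M
      - (1 : Matrix ι ι ℂ)).PosSemidef := by
  classical
  have hMM : M * M = fn (fun t => (t : ℂ) * (t : ℂ)) hM := by
    conv_lhs => rw [fn_eq_self hM]
    rw [fn_mul_fn]
    rfl
  have heq : (((δ ^ 2)⁻¹ : ℝ) : ℂ) • (M * M) + specProj (fun t => |t| ≤ δ) M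
      - (1 : Matrix ι ι ℂ)
      = fn (fun t => (((δ ^ 2)⁻¹ * (t * t) + (if |t| ≤ δ then (1:ℝ) else 0) - 1 : ℝ) : ℂ)) hM := by
    rw [hMM, fn_smul, specProj_eq_fn hM, ← fn_one hM, fn_add, fn_sub]
    exact fn_congr hM fun t => by
      show (((δ ^ 2)⁻¹ : ℝ) : ℂ) * ((t:ℂ) * (t:ℂ)) + (if |t| ≤ δ then (1:ℂ) else 0) - 1 = _
      by_cases h : |t| ≤ δ <;> simp [h] <;> push_cast <;> ring
  rw [heq]
  apply fn_posSemidef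
  intro t
  rw [Complex.zero_le_real]
  by_cases h : |t| ≤ δ
  · simp only [h, if_true]
    have h2 : 0 ≤ (δ^2)⁻¹ * (t*t) := mul_nonneg (by positivity) (mul_self_nonneg t)
    linarith
  · simp only [h, if_false]
    push_neg at h
    have h2 : δ^2 < t^2 := by
      have := sq_lt_sq' (by linarith [abs_nonneg t, neg_abs_le t] : -|t| < δ) h
      calc δ^2 < |t|^2 := by nlinarith [abs_nonneg t]
        _ = t^2 := sq_abs t
    have hδ2 : (0:ℝ) < δ^2 := by positivity
    have : 1 ≤ (δ^2)⁻¹ * (t*t) := by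
      rw [← sq] at *
      rw [inv_mul_eq_div, le_div_iff₀ hδ2]
      linarith
    linarith

/-- product of a commuting list of Hermitian projections is a Hermitian projection -/
lemma listprod_herm_idem : ∀ (L : List (Matrix ι ι ℂ)),
    (∀ P ∈ L, P.IsHermitian ∧ P * P = P) → L.Pairwise Commute →
    (L.prod.IsHermitian ∧ L.prod * L.prod = L.prod) := by
  intro L
  induction L with
  | nil => intro _ _; constructor
           · simpa using Matrix.isHermitian_one
           · simp
  | cons P T ih =>
    intro hmem hpw
    obtain ⟨hPh, hPi⟩ := hmem P (List.mem_cons_self)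
    have hpwT := (List.pairwise_cons.mp hpw).2
    have hcomm := (List.pairwise_cons.mp hpw).1
    obtain ⟨hWh, hWi⟩ := ih (fun Q hQ => hmem Q (List.mem_cons_of_mem _ hQ)) hpwT
    have hPW : Commute P T.prod := Commute.list_prod_right _ _ hcomm
    rw [List.prod_cons]
    constructor
    · show (P * T.prod)ᴴ = P * T.prod
      rw [Matrix.conjTranspose_mul, hPh.eq, hWh.eq, hPW.eq]
    · calc P * T.prod * (P * T.prod) = P * (T.prod * P) * T.prod := by noncomm_ring
        _ = P * (P * T.prod) * T.prod := by rw [hPW.eq]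
        _ = (P * P) * (T.prod * T.prod) := by noncomm_ring
        _ = P * T.prod := by rw [hPi, hWi]

lemma trace_proj_le {ρ W : Matrix ι ι ℂ} (hρ : ρ.PosSemidef)
    (hWh : W.IsHermitian) (hWi : W * W = W) :
    (ρ * W).trace.re ≤ ρ.trace.re := by
  obtain ⟨h1h, h1i⟩ := one_sub_proj hWh hWi
  have hpsd := psd_of_proj h1h h1i
  have h0 : 0 ≤ (ρ * (1 - W)).trace.re := trace_mul_psd_re_nonneg hρ hpsd
  have : ρ * (1 - W) = ρ - ρ * W := by noncomm_ring
  rw [this, Matrix.trace_sub, Complex.sub_re] at h0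
  linarith

lemma union_bound {ρ : Matrix ι ι ℂ} (hρ : ρ.PosSemidef) :
    ∀ (L : List (Matrix ι ι ℂ)),
    (∀ P ∈ L, P.IsHermitian ∧ P * P = P) → L.Pairwise Commute →
    ρ.trace.re - ((L.map (fun P => (ρ * ((1:Matrix ι ι ℂ) - P)).trace.re)).sum)
      ≤ (ρ * L.prod).trace.re := by
  intro L
  induction L with
  | nil => intro _ _; simp
  | cons P T ih =>
    intro hmem hpw
    obtain ⟨hPh, hPi⟩ := hmem P (List.mem_cons_self)
    have hpwT := (List.pairwise_cons.mp hpw).2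
    have hcomm := (List.pairwise_cons.mp hpw).1
    obtain ⟨hWh, hWi⟩ := listprod_herm_idem T
      (fun Q hQ => hmem Q (List.mem_cons_of_mem _ hQ)) hpwT
    have hPW : Commute P T.prod := Commute.list_prod_right _ _ hcomm
    have IH := ih (fun Q hQ => hmem Q (List.mem_cons_of_mem _ hQ)) hpwT
    set W := T.prod
    -- trace(ρ(1-P)W) ≤ trace(ρ(1-P))
    have key : (ρ * (((1:Matrix ι ι ℂ) - P) * W)).trace.re
        ≤ (ρ * ((1:Matrix ι ι ℂ) - P)).trace.re := by
      obtain ⟨h1Ph, h1Pi⟩ := one_sub_proj hPh hPi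
      obtain ⟨h1Wh, h1Wi⟩ := one_sub_proj hWh hWi
      have hc : Commute ((1:Matrix ι ι ℂ) - P) ((1:Matrix ι ι ℂ) - W) :=
        ((Commute.one_right _).sub_right ((Commute.one_left _).sub_left hPW))
      have hRh : (((1:Matrix ι ι ℂ) - P) * ((1:Matrix ι ι ℂ) - W)).IsHermitian := by
        show _ᴴ = _
        rw [Matrix.conjTranspose_mul, h1Ph.eq, h1Wh.eq, hc.eq]
      have hRi : (((1:Matrix ι ι ℂ) - P) * ((1:Matrix ι ι ℂ) - W))
          * (((1:Matrix ι ι ℂ) - P) * ((1:Matrix ι ι ℂ) - W))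
          = ((1:Matrix ι ι ℂ) - P) * ((1:Matrix ι ι ℂ) - W) := by
        calc ((1:Matrix ι ι ℂ) - P) * ((1:Matrix ι ι ℂ) - W)
              * (((1:Matrix ι ι ℂ) - P) * ((1:Matrix ι ι ℂ) - W))
            = ((1:Matrix ι ι ℂ) - P) * (((1:Matrix ι ι ℂ) - W) * ((1:Matrix ι ι ℂ) - P))
              * ((1:Matrix ι ι ℂ) - W) := by noncomm_ring
          _ = ((1:Matrix ι ι ℂ) - P) * (((1:Matrix ι ι ℂ) - P) * ((1:Matrix ι ι ℂ) - W))
              * ((1:Matrix ι ι ℂ) - W) := by rw [hc.eq]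
          _ = (((1:Matrix ι ι ℂ) - P) * ((1:Matrix ι ι ℂ) - P))
              * (((1:Matrix ι ι ℂ) - W) * ((1:Matrix ι ι ℂ) - W)) := by noncomm_ring
          _ = _ := by rw [h1Pi, h1Wi]
      have h0 : 0 ≤ (ρ * (((1:Matrix ι ι ℂ) - P) * ((1:Matrix ι ι ℂ) - W))).trace.re :=
        trace_mul_psd_re_nonneg hρ (psd_of_proj hRh hRi)
      have hsplit : ρ * (((1:Matrix ι ι ℂ) - P) * ((1:Matrix ι ι ℂ) - W))
          = ρ * ((1:Matrix ι ι ℂ) - P) - ρ * (((1:Matrix ι ι ℂ) - P) * W) := by noncomm_ring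
      rw [hsplit, Matrix.trace_sub, Complex.sub_re] at h0
      linarith
    have hsplit2 : ρ * (P * W) = ρ * W - ρ * (((1:Matrix ι ι ℂ) - P) * W) := by noncomm_ring
    rw [List.prod_cons, List.map_cons, List.sum_cons, hsplit2, Matrix.trace_sub,
      Complex.sub_re]
    linarith

end SH
namespace SH

/-- duality-type bound: trace against a Hermitian matrix, via entries -/
lemma abs_trace_mul_le {ι : Type*} [Fintype ι] [DecidableEq ι] {σ : Matrix ι ι ℂ}
    (hσ : σ.IsHermitian) (X : Matrix ι ι ℂ) (K : ℝ) (hK : ∀ x y, ‖X x y‖ ≤ K) :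
    ‖(σ * X).trace‖ ≤ (Fintype.card ι : ℝ)^2 * (traceNorm σ * K) := by
  rcases isEmpty_or_nonempty ι with hempty | hne
  · simp [Matrix.trace]
  · have hK0 : 0 ≤ K := le_trans (norm_nonneg _) (hK (Classical.arbitrary ι) (Classical.arbitrary ι))
    have h1 : (σ * X).trace = ∑ x, ∑ y, σ x y * X y x := by
      simp [Matrix.trace, Matrix.diag, Matrix.mul_apply]
    rw [h1]
    refine le_trans (norm_sum_le _ _) ?_
    refine le_trans (Finset.sum_le_sum fun x _ => norm_sum_le _ _) ?_
    have hterm : ∀ x y : ι, ‖σ x y * X y x‖ ≤ traceNorm σ * K := by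
      intro x y
      rw [norm_mul]
      exact mul_le_mul (entry_abs_le_traceNorm hσ x y) (hK y x) (norm_nonneg _)
        (traceNorm_nonneg' σ)
    refine le_trans (Finset.sum_le_sum fun x _ => Finset.sum_le_sum fun y _ => hterm x y) ?_
    rw [Finset.sum_const, Finset.sum_const, Finset.card_univ]
    simp only [nsmul_eq_mul]
    rw [← mul_assoc, ← sq]

variable {d n : ℕ}

/-- a product observable supported inside `I`, extended by the identity outside -/
def embedOnC (I : Finset (Fin n)) (Z : Mat d) : MatN d n :=
  fun x y => if ∀ j ∉ I, x j = y j then ∏ k : I, Z (x k) (y k) else 0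

lemma combine_mem {I : Finset (Fin n)} (x : (i : I) → Fin d)
    (c : (j : {j : Fin n // j ∉ I}) → Fin d) {j : Fin n} (h : j ∈ I) :
    combine I x c j = x ⟨j, h⟩ := dif_pos h

lemma combine_not_mem {I : Finset (Fin n)} (x : (i : I) → Fin d)
    (c : (j : {j : Fin n // j ∉ I}) → Fin d) {j : Fin n} (h : j ∉ I) :
    combine I x c j = c ⟨j, h⟩ := dif_neg h

/-- configurations on `[n]` are pairs of configurations on `I` and its complement -/
def combEquiv (I : Finset (Fin n)) :
    (((i : I) → Fin d) × ((j : {j : Fin n // j ∉ I}) → Fin d)) ≃ (Fin n → Fin d) where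
  toFun p := combine I p.1 p.2
  invFun z := (fun i => z i, fun j => z j)
  left_inv p := by
    refine Prod.ext ?_ ?_
    · funext i
      show combine I p.1 p.2 ↑i = p.1 i
      rw [combine_mem p.1 p.2 i.2, Subtype.coe_eta]
    · funext j
      show combine I p.1 p.2 ↑j = p.2 j
      rw [combine_not_mem p.1 p.2 j.2, Subtype.coe_eta]
  right_inv z := by
    funext j
    show combine I _ _ j = z j
    unfold combine
    split <;> rfl

lemma inner_key (ρ : MatN d n) (I : Finset (Fin n)) (Z : Mat d)
    (xI yI : (i : I) → Fin d) (xc : (j : {j : Fin n // j ∉ I}) → Fin d) :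
    ∑ yc : (j : {j : Fin n // j ∉ I}) → Fin d,
      ρ (combine I xI xc) (combine I yI yc) * embedOnC I Z (combine I yI yc) (combine I xI xc)
    = ρ (combine I xI xc) (combine I yI xc) * tpowOn Z I yI xI := by
  rw [Finset.sum_eq_single_of_mem xc (Finset.mem_univ _)]
  · have hcond : ∀ j ∉ I, combine I yI xc j = combine I xI xc j := fun j h => by
      rw [combine_not_mem _ _ h, combine_not_mem _ _ h]
    have hval : ∏ k : I, Z (combine I yI xc ↑k) (combine I xI xc ↑k) = tpowOn Z I yI xI := by
      unfold tpowOn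
      refine Finset.prod_congr rfl fun k _ => ?_
      rw [combine_mem _ _ k.2, combine_mem _ _ k.2]
    unfold embedOnC
    rw [if_pos hcond, hval]
  · intro yc _ hne
    have hnc : ¬ (∀ j ∉ I, combine I yI yc j = combine I xI xc j) := by
      intro hco
      apply hne
      funext j
      have h := hco ↑j j.2
      rw [combine_not_mem _ _ j.2, combine_not_mem _ _ j.2] at h
      exact h
    unfold embedOnC
    rw [if_neg hnc, mul_zero]

/-- The fundamental marginal/trace identity. -/
lemma trace_mul_embedOnC (ρ : MatN d n) (I : Finset (Fin n)) (Z : Mat d) :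
    (ρ * embedOnC I Z).trace = (marginal ρ I * tpowOn Z I).trace := by
  have h1 : (ρ * embedOnC I Z).trace = ∑ x, ∑ y, ρ x y * embedOnC I Z y x := by
    simp [Matrix.trace, Matrix.diag, Matrix.mul_apply]
  have h2 : (marginal ρ I * tpowOn Z I).trace
      = ∑ xI, ∑ yI, marginal ρ I xI yI * tpowOn Z I yI xI := by
    simp [Matrix.trace, Matrix.diag, Matrix.mul_apply]
  rw [h1, h2]
  calc ∑ x, ∑ y, ρ x y * embedOnC I Z y x
      = ∑ p : (((i : I) → Fin d) × ((j : {j : Fin n // j ∉ I}) → Fin d)),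
          ∑ q : (((i : I) → Fin d) × ((j : {j : Fin n // j ∉ I}) → Fin d)),
          ρ (combEquiv I p) (combEquiv I q)
            * embedOnC I Z (combEquiv I q) (combEquiv I p) := by
        rw [← Equiv.sum_comp (combEquiv (d := d) I)
          (g := fun x => ∑ y, ρ x y * embedOnC I Z y x)]
        exact Finset.sum_congr rfl fun p _ =>
          (Equiv.sum_comp (combEquiv (d := d) I)
            (g := fun y => ρ (combEquiv I p) y * embedOnC I Z y (combEquiv I p))).symm
    _ = ∑ xI, ∑ xc, ∑ yI, ∑ yc,
          ρ (combine I xI xc) (combine I yI yc)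
            * embedOnC I Z (combine I yI yc) (combine I xI xc) := by
        rw [Fintype.sum_prod_type]
        exact Finset.sum_congr rfl fun xI _ => Finset.sum_congr rfl fun xc _ =>
          Fintype.sum_prod_type _
    _ = ∑ xI, ∑ xc, ∑ yI,
          ρ (combine I xI xc) (combine I yI xc) * tpowOn Z I yI xI := by
        exact Finset.sum_congr rfl fun xI _ => Finset.sum_congr rfl fun xc _ =>
          Finset.sum_congr rfl fun yI _ => inner_key ρ I Z xI yI xc
    _ = ∑ xI, ∑ yI, ∑ xc,
          ρ (combine I xI xc) (combine I yI xc) * tpowOn Z I yI xI := by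
        exact Finset.sum_congr rfl fun xI _ => Finset.sum_comm
    _ = ∑ xI, ∑ yI, marginal ρ I xI yI * tpowOn Z I yI xI := by
        refine Finset.sum_congr rfl fun xI _ => Finset.sum_congr rfl fun yI _ => ?_
        rw [marginal, Finset.sum_mul]

lemma sum_prod_pi {ι : Type*} [Fintype ι] [DecidableEq ι] (F : ι → Fin d → ℂ) :
    ∑ y : ι → Fin d, ∏ k, F k (y k) = ∏ k, ∑ b, F k b := by
  rw [Finset.prod_univ_sum]
  rw [Fintype.piFinset_univ]

/-- trace of a product of two product operators factorizes -/
lemma trace_tpowOn_mul (γ Z : Mat d) (I : Finset (Fin n)) :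
    (tpowOn γ I * tpowOn Z I).trace = ((γ * Z).trace) ^ I.card := by
  have h1 : (tpowOn γ I * tpowOn Z I).trace
      = ∑ x : (i : I) → Fin d, ∑ y : (i : I) → Fin d,
          ∏ k, (γ (x k) (y k) * Z (y k) (x k)) := by
    simp only [Matrix.trace, Matrix.diag, Matrix.mul_apply, tpowOn]
    exact Finset.sum_congr rfl fun x _ => Finset.sum_congr rfl fun y _ =>
      (Finset.prod_mul_distrib).symm
  rw [h1]
  have h2 : ∀ x : (i : I) → Fin d, ∑ y : (i : I) → Fin d, ∏ k, (γ (x k) (y k) * Z (y k) (x k))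
      = ∏ k, (∑ b, γ (x k) b * Z b (x k)) := fun x =>
    sum_prod_pi (fun k b => γ (x k) b * Z b (x k))
  rw [Finset.sum_congr rfl fun x _ => h2 x]
  rw [sum_prod_pi (fun k a => ∑ b, γ a b * Z b a)]
  have h3 : ∀ k : I, (∑ a, ∑ b, γ a b * Z b a) = (γ * Z).trace := by
    intro k
    simp [Matrix.trace, Matrix.diag, Matrix.mul_apply]
  rw [Finset.prod_congr rfl fun k _ => h3 k, Finset.prod_const, Finset.card_univ,
    Fintype.card_coe]

lemma embedAt_eq_embedOnC (Z : Mat d) (i : Fin n) : embedAt n Z i = embedOnC {i} Z := by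
  ext x y
  unfold embedAt embedOnC
  have hcond : (∀ j, j ≠ i → x j = y j) ↔ (∀ j ∉ ({i} : Finset (Fin n)), x j = y j) := by
    simp [Finset.mem_singleton]
  have hval : Z (x i) (y i) = ∏ k : ({i} : Finset (Fin n)), Z (x ↑k) (y ↑k) := by
    rw [Finset.prod_coe_sort (f := fun a => Z (x a) (y a)), Finset.prod_singleton]
  exact if_congr hcond hval rfl

lemma embedAt_mul_same (A B : Mat d) (i : Fin n) :
    embedAt n A i * embedAt n B i = embedAt n (A * B) i := by
  ext x y
  rw [Matrix.mul_apply]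
  simp only [embedAt]
  by_cases h : ∀ j, j ≠ i → x j = y j
  · rw [if_pos h, Matrix.mul_apply]
    have himg : ∀ z : Fin n → Fin d, (∀ j, j ≠ i → x j = z j) →
        z = Function.update x i (z i) := by
      intro z hz; funext k
      by_cases hk : k = i
      · subst hk; simp
      · rw [Function.update_of_ne hk]; exact (hz k hk).symm
    have hvan : ∀ z ∈ (Finset.univ : Finset (Fin n → Fin d)),
        z ∉ Finset.univ.image (fun p => Function.update x i p) →
        (if ∀ j, j ≠ i → x j = z j then A (x i) (z i) else 0)
          * (if ∀ j, j ≠ i → z j = y j then B (z i) (y i) else 0) = 0 := by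
      intro z _ hzs
      by_cases h1 : ∀ j, j ≠ i → x j = z j
      · exact absurd (Finset.mem_image.mpr ⟨z i, Finset.mem_univ _, (himg z h1).symm⟩) hzs
      · rw [if_neg h1, zero_mul]
    rw [← Finset.sum_subset (Finset.subset_univ _) hvan]
    rw [Finset.sum_image (by
      intro a _ b _ hab
      have := congrFun hab i
      simpa using this)]
    refine Finset.sum_congr rfl fun p _ => ?_
    have hc1 : ∀ j, j ≠ i → x j = Function.update x i p j := fun j hj =>
      (Function.update_of_ne hj _ _).symm
    have hc2 : ∀ j, j ≠ i → Function.update x i p j = y j := fun j hj =>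
      (Function.update_of_ne hj _ _).trans (h j hj)
    rw [if_pos hc1, if_pos hc2, Function.update_self]
  · rw [if_neg h]
    apply Finset.sum_eq_zero
    intro z _
    by_cases h1 : ∀ j, j ≠ i → x j = z j
    · by_cases h2 : ∀ j, j ≠ i → z j = y j
      · exact absurd (fun j hj => (h1 j hj).trans (h2 j hj)) h
      · rw [if_neg h2, mul_zero]
    · rw [if_neg h1, zero_mul]

lemma embedAt_mul_ne (A B : Mat d) {i j : Fin n} (hij : i ≠ j) (x y : Fin n → Fin d) :
    (embedAt n A i * embedAt n B j) x y
      = if ∀ k, k ≠ i → k ≠ j → x k = y k then A (x i) (y i) * B (x j) (y j) else 0 := by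
  rw [Matrix.mul_apply]
  set z₀ : Fin n → Fin d := fun k => if k = j then x j else y k with hz₀
  rw [Finset.sum_eq_single_of_mem z₀ (Finset.mem_univ _)]
  · simp only [embedAt]
    by_cases h : ∀ k, k ≠ i → k ≠ j → x k = y k
    · have hc1 : ∀ k, k ≠ i → x k = z₀ k := by
        intro k hk
        by_cases hkj : k = j
        · subst hkj; simp [hz₀]
        · simp only [hz₀, if_neg hkj]; exact h k hk hkj
      have hc2 : ∀ k, k ≠ j → z₀ k = y k := by
        intro k hk; simp [hz₀, hk]
      have e1 : z₀ i = y i := by simp [hz₀, hij]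
      have e2 : z₀ j = x j := by simp [hz₀]
      rw [if_pos hc1, if_pos hc2, if_pos h, e1, e2]
    · rw [if_neg h]
      by_cases h1 : ∀ k, k ≠ i → x k = z₀ k
      · exfalso; apply h; intro k hki hkj
        have hx := h1 k hki
        simpa [hz₀, if_neg hkj] using hx
      · rw [if_neg h1, zero_mul]
  · intro z _ hz
    simp only [embedAt]
    by_cases h1 : ∀ k, k ≠ i → x k = z k
    · by_cases h2 : ∀ k, k ≠ j → z k = y k
      · exfalso; apply hz; funext k
        by_cases hkj : k = j
        · subst hkj
          have := (h1 k (Ne.symm hij)).symm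
          simpa [hz₀] using this
        · simp only [hz₀, if_neg hkj]
          exact h2 k hkj
      · rw [if_neg h2, mul_zero]
    · rw [if_neg h1, zero_mul]

lemma embedAt_mul_of_ne (A : Mat d) {i j : Fin n} (hij : i ≠ j) :
    embedAt n A i * embedAt n A j = embedOnC {i, j} A := by
  ext x y
  rw [embedAt_mul_ne A A hij]
  unfold embedOnC
  have hmem : ∀ k : Fin n, (k ∉ ({i, j} : Finset (Fin n))) ↔ (k ≠ i ∧ k ≠ j) := by
    intro k; simp [not_or]
  have hcond : (∀ k, k ≠ i → k ≠ j → x k = y k)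
      ↔ (∀ k ∉ ({i, j} : Finset (Fin n)), x k = y k) := by
    constructor
    · intro hh k hk; exact hh k ((hmem k).mp hk).1 ((hmem k).mp hk).2
    · intro hh k h1 h2; exact hh k ((hmem k).mpr ⟨h1, h2⟩)
  have hval : A (x i) (y i) * A (x j) (y j)
      = ∏ k : ({i, j} : Finset (Fin n)), A (x ↑k) (y ↑k) := by
    rw [Finset.prod_coe_sort (f := fun a => A (x a) (y a)), Finset.prod_pair hij]
  exact if_congr hcond hval rfl

lemma embedAt_comm {A B : Mat d} (hAB : Commute A B) (i j : Fin n) :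
    Commute (embedAt n A i) (embedAt n B j) := by
  by_cases hij : i = j
  · subst hij
    show _ = _
    rw [embedAt_mul_same, embedAt_mul_same, hAB.eq]
  · show _ = _
    ext x y
    rw [embedAt_mul_ne A B hij, embedAt_mul_ne B A (Ne.symm hij)]
    have hcond : (∀ k, k ≠ i → k ≠ j → x k = y k) ↔ (∀ k, k ≠ j → k ≠ i → x k = y k) := by
      constructor <;> intro hh k h1 h2 <;> exact hh k h2 h1
    exact if_congr hcond (mul_comm _ _) rfl

lemma marginal_isHermitian {ρ : MatN d n} (hρ : ρ.IsHermitian) (I : Finset (Fin n)) :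
    (marginal ρ I).IsHermitian := by
  have hsr : ∀ a b, star (ρ a b) = ρ b a := by
    intro a b
    rw [← Matrix.conjTranspose_apply, hρ.eq]
  show _ᴴ = _
  ext x y
  rw [Matrix.conjTranspose_apply]
  unfold marginal
  rw [star_sum]
  exact Finset.sum_congr rfl fun c _ => hsr _ _

lemma tpowOn_isHermitian {γ : Mat d} (hγ : γ.IsHermitian) (I : Finset (Fin n)) :
    (tpowOn γ I).IsHermitian := by
  have hsr : ∀ a b, star (γ a b) = γ b a := by
    intro a b
    rw [← Matrix.conjTranspose_apply, hγ.eq]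
  show _ᴴ = _
  ext x y
  rw [Matrix.conjTranspose_apply]
  unfold tpowOn
  rw [show (star (∏ i : I, γ (y i) (x i)) : ℂ) = ∏ i : I, star (γ (y i) (x i)) from
    map_prod (starRingEnd ℂ) _ _]
  exact Finset.prod_congr rfl fun k _ => hsr _ _

/-- entries of `tpowOn` are bounded by (sum of entry moduli)^card -/
lemma tpowOn_entry_bound (Z : Mat d) (I : Finset (Fin n)) (x y : (i : I) → Fin d) :
    ‖tpowOn Z I x y‖ ≤ (∑ p, ∑ q, ‖Z p q‖) ^ I.card := by
  have hK : ∀ a b, ‖Z a b‖ ≤ ∑ p, ∑ q, ‖Z p q‖ := by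
    intro a b
    calc ‖Z a b‖ ≤ ∑ q, ‖Z a q‖ :=
          Finset.single_le_sum (f := fun q => ‖Z a q‖)
            (fun q _ => norm_nonneg _) (Finset.mem_univ b)
      _ ≤ ∑ p, ∑ q, ‖Z p q‖ :=
          Finset.single_le_sum (f := fun p => ∑ q, ‖Z p q‖)
            (fun p _ => Finset.sum_nonneg fun q _ => norm_nonneg _) (Finset.mem_univ a)
  unfold tpowOn
  rw [show ‖∏ i : I, Z (x i) (y i)‖ = ∏ i : I, ‖Z (x i) (y i)‖ from
    norm_prod _ _]
  calc ∏ i : I, ‖Z (x i) (y i)‖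
      ≤ ∏ _i : I, (∑ p, ∑ q, ‖Z p q‖) :=
        Finset.prod_le_prod (fun _ _ => norm_nonneg _) (fun k _ => hK _ _)
    _ = (∑ p, ∑ q, ‖Z p q‖) ^ I.card := by
        rw [Finset.prod_const, Finset.card_univ, Fintype.card_coe]

end SH
namespace SH

variable {d n : ℕ}

lemma sum_powersetCard_one {β : Type*} [AddCommMonoid β] (f : Finset (Fin n) → β) :
    ∑ I ∈ Finset.powersetCard 1 (Finset.univ : Finset (Fin n)), f I = ∑ i : Fin n, f {i} := by
  rw [Finset.powersetCard_one, Finset.sum_map]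
  rfl

lemma sum_offDiag_eq (f : Finset (Fin n) → ℝ) :
    ∑ p ∈ (Finset.univ : Finset (Fin n)).offDiag, f {p.1, p.2}
      = 2 * ∑ I ∈ Finset.powersetCard 2 (Finset.univ : Finset (Fin n)), f I := by
  have hmaps : ∀ p ∈ (Finset.univ : Finset (Fin n)).offDiag,
      ({p.1, p.2} : Finset (Fin n)) ∈ Finset.powersetCard 2 (Finset.univ : Finset (Fin n)) := by
    intro p hp
    rw [Finset.mem_powersetCard]
    refine ⟨Finset.subset_univ _, ?_⟩
    exact Finset.card_pair (Finset.mem_offDiag.mp hp).2.2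
  rw [← Finset.sum_fiberwise_of_maps_to hmaps (fun p => f {p.1, p.2})]
  rw [Finset.mul_sum]
  refine Finset.sum_congr rfl fun I hI => ?_
  obtain ⟨a, b, hab, rfl⟩ :=
    Finset.card_eq_two.mp (Finset.mem_powersetCard.mp hI).2
  have hfilter : Finset.filter (fun p : Fin n × Fin n => ({p.1, p.2} : Finset (Fin n)) = {a, b})
      (Finset.univ : Finset (Fin n)).offDiag = {(a, b), (b, a)} := by
    ext ⟨u, v⟩
    simp only [Finset.mem_filter, Finset.mem_offDiag, Finset.mem_univ, true_and,
      Finset.mem_insert, Finset.mem_singleton]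
    constructor
    · rintro ⟨huv, heq⟩
      have hu : u = a ∨ u = b := by
        have : u ∈ ({a, b} : Finset (Fin n)) := heq ▸ (by simp)
        simpa using this
      have hv : v = a ∨ v = b := by
        have : v ∈ ({a, b} : Finset (Fin n)) := heq ▸ (by simp)
        simpa using this
      rcases hu with hu | hu <;> rcases hv with hv | hv
      · exact absurd (hu.trans hv.symm) huv
      · left; rw [Prod.ext_iff]; exact ⟨hu, hv⟩
      · right; rw [Prod.ext_iff]; exact ⟨hu, hv⟩
      · exact absurd (hu.trans hv.symm) huv
    · rintro (h | h)
      · have h1 : u = a := congrArg Prod.fst h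
        have h2 : v = b := congrArg Prod.snd h
        subst h1; subst h2
        exact ⟨hab, rfl⟩
      · have h1 : u = b := congrArg Prod.fst h
        have h2 : v = a := congrArg Prod.snd h
        subst h1; subst h2
        exact ⟨Ne.symm hab, Finset.pair_comm _ _⟩
  rw [hfilter]
  have hne : ((a, b) : Fin n × Fin n) ∉ ({(b, a)} : Finset (Fin n × Fin n)) := by
    simp only [Finset.mem_singleton, Prod.ext_iff]
    rintro ⟨h1, -⟩
    exact hab h1
  rw [Finset.sum_insert hne, Finset.sum_singleton]
  show f {a, b} + f {b, a} = 2 * f {a, b}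
  rw [Finset.pair_comm b a]
  ring

lemma embedAt_sub_smul_one (A : Mat d) (a : ℂ) (i : Fin n) :
    embedAt n (A - a • (1 : Mat d)) i = embedAt n A i - a • (1 : MatN d n) := by
  ext x y
  simp only [embedAt, Matrix.sub_apply, Matrix.smul_apply, Matrix.one_apply, smul_eq_mul]
  by_cases h : ∀ j, j ≠ i → x j = y j
  · rw [if_pos h, if_pos h]
    have hiff : (x = y) ↔ (x i = y i) := by
      constructor
      · intro he; rw [he]
      · intro he; funext k
        by_cases hk : k = i
        · subst hk; exact he
        · exact h k hk
    by_cases hxy : x i = y i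
    · rw [if_pos hxy, if_pos (hiff.mpr hxy)]
    · rw [if_neg hxy, if_neg (fun hh => hxy (hiff.mp hh))]
  · rw [if_neg h, if_neg h]
    have hxy : x ≠ y := fun he => h (fun j _ => by rw [he])
    rw [if_neg hxy]
    ring

lemma embedAt_isHermitian {A : Mat d} (hA : A.IsHermitian) (i : Fin n) :
    (embedAt n A i).IsHermitian := by
  have hsr : ∀ a b, star (A a b) = A b a := by
    intro a b; rw [← Matrix.conjTranspose_apply, hA.eq]
  show _ᴴ = _
  ext x y
  rw [Matrix.conjTranspose_apply]
  unfold embedAt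
  have hcond : (∀ j, j ≠ i → y j = x j) ↔ (∀ j, j ≠ i → x j = y j) :=
    ⟨fun h j hj => (h j hj).symm, fun h j hj => (h j hj).symm⟩
  by_cases h : ∀ j, j ≠ i → x j = y j
  · rw [if_pos (hcond.mpr h), if_pos h, hsr]
  · rw [if_neg (fun hh => h (hcond.mp hh)), if_neg h, star_zero]

lemma avg_sub_eq (A : Mat d) (a : ℂ) (hn : n ≠ 0) :
    avgObs n A - a • (1 : MatN d n)
      = (n : ℂ)⁻¹ • ∑ i : Fin n, embedAt n (A - a • (1 : Mat d)) i := by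
  rw [Finset.sum_congr rfl fun i _ => embedAt_sub_smul_one A a i]
  rw [Finset.sum_sub_distrib, Finset.sum_const, Finset.card_univ, Fintype.card_fin, smul_sub]
  rw [avgObs]
  congr 1
  rw [← Nat.cast_smul_eq_nsmul ℂ, smul_smul, inv_mul_cancel₀ (Nat.cast_ne_zero.mpr hn), one_smul]

lemma smul_one_commute (c : ℂ) (X : MatN d n) : Commute (c • (1 : MatN d n)) X := by
  show _ = _
  rw [Matrix.smul_mul, Matrix.mul_smul, Matrix.one_mul, Matrix.mul_one]

lemma commute_avg_sub {A B : Mat d} (hAB : Commute A B) (a b : ℂ) :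
    Commute (avgObs n A - a • (1 : MatN d n)) (avgObs n B - b • (1 : MatN d n)) := by
  have h1 : Commute (avgObs n A) (avgObs n B) := by
    unfold avgObs
    apply Commute.smul_left
    apply Commute.smul_right
    exact Commute.sum_left _ _ _ fun i _ => Commute.sum_right _ _ _ fun j _ =>
      embedAt_comm hAB i j
  apply Commute.sub_left
  · apply Commute.sub_right h1
    exact (smul_one_commute b _).symm
  · apply Commute.sub_right (smul_one_commute a _)
    exact smul_one_commute a _

lemma avgObs_sub_isHermitian {A : Mat d} (hA : A.IsHermitian) {a : ℂ} (ha : star a = a) :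
    (avgObs n A - a • (1 : MatN d n)).IsHermitian := by
  have h1 : (avgObs n A).IsHermitian := by
    unfold avgObs
    show _ᴴ = _
    rw [Matrix.conjTranspose_smul, Matrix.conjTranspose_sum]
    rw [show (star ((n : ℂ)⁻¹)) = ((n : ℂ)⁻¹) by simp]
    congr 1
    exact Finset.sum_congr rfl fun i _ => (embedAt_isHermitian hA i).eq
  show _ᴴ = _
  rw [Matrix.conjTranspose_sub, h1.eq, Matrix.conjTranspose_smul, Matrix.conjTranspose_one, ha]

lemma trace_mul_herm_real {ι : Type*} [Fintype ι] [DecidableEq ι] {X Y : Matrix ι ι ℂ}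
    (hX : X.IsHermitian) (hY : Y.IsHermitian) :
    (X * Y).trace = (((X * Y).trace.re : ℝ) : ℂ) := by
  have h : star ((X * Y).trace) = (X * Y).trace := by
    rw [← Matrix.trace_conjTranspose, Matrix.conjTranspose_mul, hX.eq, hY.eq,
      Matrix.trace_mul_comm]
  exact (Complex.conj_eq_iff_re.mp h).symm

end SH
namespace SH

variable {d : ℕ}

lemma card_pi_I {n : ℕ} (I : Finset (Fin n)) :
    Fintype.card ((k : I) → Fin d) = d ^ I.card := by
  rw [Fintype.card_pi]
  simp [Finset.prod_const, Finset.card_univ, Fintype.card_coe]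

set_option maxHeartbeats 1000000 in
lemma main_var (γ : Mat d) (hγh : γ.IsHermitian) (hγt : γ.trace = 1)
    (ρseq : ∀ n, MatN d n) (hdens : ∀ n, IsDensity (ρseq n))
    (hwaiid : WeaklyAlmostIID γ ρseq) (A : Mat d) :
    Tendsto (fun n => ‖(ρseq n * ((avgObs n A - (γ * A).trace • 1)
        * (avgObs n A - (γ * A).trace • 1))).trace‖) atTop (nhds 0) := by
  set a : ℂ := (γ * A).trace with ha
  set A' : Mat d := A - a • (1 : Mat d) with hA'
  have hγA' : (γ * A').trace = 0 := by
    rw [hA', Matrix.mul_sub, Matrix.trace_sub, Matrix.mul_smul, Matrix.trace_smul,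
      Matrix.mul_one, hγt, ← ha]
    simp
  set K1 : ℝ := ∑ p, ∑ q, ‖A' p q‖ with hK1
  set K2 : ℝ := ∑ p, ∑ q, ‖(A' * A') p q‖ with hK2
  set c1 : ℝ := ‖(γ * (A' * A')).trace‖ with hc1
  set S1 : ℕ → ℝ := fun n => ∑ I ∈ Finset.powersetCard 1 (Finset.univ : Finset (Fin n)),
    traceNorm (marginal (ρseq n) I - tpowOn γ I) with hS1
  set S2 : ℕ → ℝ := fun n => ∑ I ∈ Finset.powersetCard 2 (Finset.univ : Finset (Fin n)),
    traceNorm (marginal (ρseq n) I - tpowOn γ I) with hS2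
  have hK1nn : 0 ≤ K1 := Finset.sum_nonneg fun p _ => Finset.sum_nonneg fun q _ =>
    norm_nonneg _
  have hK2nn : 0 ≤ K2 := Finset.sum_nonneg fun p _ => Finset.sum_nonneg fun q _ =>
    norm_nonneg _
  have hS2nn : ∀ n, 0 ≤ S2 n := fun n => Finset.sum_nonneg fun I _ => traceNorm_nonneg' _
  -- diagonal term bound
  have hdiag : ∀ (n : ℕ) (i : Fin n),
      ‖(ρseq n * (embedAt n A' i * embedAt n A' i)).trace‖
        ≤ (d:ℝ)^2 * (traceNorm (marginal (ρseq n) {i} - tpowOn γ {i}) * K2) + c1 := by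
    intro n i
    rw [embedAt_mul_same, embedAt_eq_embedOnC, trace_mul_embedOnC]
    have hsplit : marginal (ρseq n) {i} * tpowOn (A' * A') {i}
        = (marginal (ρseq n) {i} - tpowOn γ {i}) * tpowOn (A' * A') {i}
          + tpowOn γ {i} * tpowOn (A' * A') {i} := by noncomm_ring
    rw [hsplit, Matrix.trace_add]
    refine le_trans (norm_add_le _ _) (add_le_add ?_ ?_)
    · have hherm : (marginal (ρseq n) {i} - tpowOn γ {i}).IsHermitian :=
        (marginal_isHermitian (hdens n).1.1 _).sub (tpowOn_isHermitian hγh _)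
      have hbound := abs_trace_mul_le hherm (tpowOn (A' * A') {i})
        (K2 ^ ({i} : Finset (Fin n)).card) (fun x y => tpowOn_entry_bound _ _ x y)
      rw [card_pi_I, Finset.card_singleton, pow_one, pow_one] at hbound
      exact_mod_cast hbound
    · rw [trace_tpowOn_mul, Finset.card_singleton, pow_one]
  -- off-diagonal term bound
  have hoff : ∀ (n : ℕ) (i j : Fin n), i ≠ j →
      ‖(ρseq n * (embedAt n A' i * embedAt n A' j)).trace‖
        ≤ (d:ℝ)^4 * (traceNorm (marginal (ρseq n) {i, j} - tpowOn γ {i, j}) * K1^2) := by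
    intro n i j hij
    rw [embedAt_mul_of_ne A' hij, trace_mul_embedOnC]
    have hsplit : marginal (ρseq n) {i, j} * tpowOn A' {i, j}
        = (marginal (ρseq n) {i, j} - tpowOn γ {i, j}) * tpowOn A' {i, j}
          + tpowOn γ {i, j} * tpowOn A' {i, j} := by noncomm_ring
    rw [hsplit, Matrix.trace_add]
    have hzero : (tpowOn γ ({i, j} : Finset (Fin n)) * tpowOn A' {i, j}).trace = 0 := by
      rw [trace_tpowOn_mul, hγA', Finset.card_pair hij]
      norm_num
    rw [hzero, add_zero]
    have hherm : (marginal (ρseq n) {i, j} - tpowOn γ {i, j}).IsHermitian :=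
      (marginal_isHermitian (hdens n).1.1 _).sub (tpowOn_isHermitian hγh _)
    have hbound := abs_trace_mul_le hherm (tpowOn A' {i, j})
      (K1 ^ ({i, j} : Finset (Fin n)).card) (fun x y => tpowOn_entry_bound _ _ x y)
    rw [card_pi_I, Finset.card_pair hij] at hbound
    calc ‖((marginal (ρseq n) {i, j} - tpowOn γ {i, j}) * tpowOn A' {i, j}).trace‖
        ≤ ((d ^ 2 : ℕ) : ℝ)^2
            * (traceNorm (marginal (ρseq n) {i, j} - tpowOn γ {i, j}) * K1 ^ 2) := hbound
      _ = (d:ℝ)^4 * (traceNorm (marginal (ρseq n) {i, j} - tpowOn γ {i, j}) * K1 ^ 2) := by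
          push_cast; ring
  -- the expansion identity
  have hexp : ∀ n : ℕ, n ≠ 0 →
      (ρseq n * ((avgObs n A - a • 1) * (avgObs n A - a • 1))).trace
        = ((n:ℂ)⁻¹ * (n:ℂ)⁻¹)
            * ∑ i, ∑ j, (ρseq n * (embedAt n A' i * embedAt n A' j)).trace := by
    intro n hn
    rw [avg_sub_eq A a hn]
    rw [smul_mul_smul]
    rw [mul_smul_comm, Matrix.trace_smul, smul_eq_mul]
    congr 1
    rw [Finset.sum_mul_sum]
    rw [Finset.mul_sum, Matrix.trace_sum]
    refine Finset.sum_congr rfl fun i _ => ?_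
    rw [Finset.mul_sum, Matrix.trace_sum]
  -- master bound for n ≥ 1
  have hmaster : ∀ n : ℕ, n ≠ 0 →
      ‖(ρseq n * ((avgObs n A - a • 1) * (avgObs n A - a • 1))).trace‖
        ≤ ((n:ℝ)^2)⁻¹ * (((d:ℝ)^2 * K2) * S1 n + n * c1 + 2 * ((d:ℝ)^4 * K1^2) * S2 n) := by
    intro n hn
    rw [hexp n hn, norm_mul]
    have habs1 : ‖(n:ℂ)⁻¹ * (n:ℂ)⁻¹‖ = ((n:ℝ)^2)⁻¹ := by
      rw [norm_mul, norm_inv, Complex.norm_natCast]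
      rw [← mul_inv, ← sq]
    rw [habs1]
    refine mul_le_mul_of_nonneg_left ?_ (by positivity)
    -- split double sum into diagonal and off-diagonal
    have hsplit : ∑ i, ∑ j, (ρseq n * (embedAt n A' i * embedAt n A' j)).trace
        = (∑ i, (ρseq n * (embedAt n A' i * embedAt n A' i)).trace)
          + ∑ p ∈ (Finset.univ : Finset (Fin n)).offDiag,
              (ρseq n * (embedAt n A' p.1 * embedAt n A' p.2)).trace := by
      have hod : (Finset.univ : Finset (Fin n)).offDiag
          = (Finset.univ ×ˢ Finset.univ).filter (fun p : Fin n × Fin n => ¬ (p.1 = p.2)) := by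
        ext p; simp [Finset.mem_offDiag, Ne]
      have hd : ((Finset.univ ×ˢ Finset.univ).filter
            (fun p : Fin n × Fin n => p.1 = p.2))
          = (Finset.univ : Finset (Fin n)).image (fun i => (i, i)) := by
        ext ⟨u, v⟩
        constructor
        · intro hmem
          have h : u = v := (Finset.mem_filter.mp hmem).2
          subst h
          exact Finset.mem_image.mpr ⟨u, Finset.mem_univ _, rfl⟩
        · intro hmem
          obtain ⟨i, -, hi⟩ := Finset.mem_image.mp hmem
          have h1 : i = u := congrArg Prod.fst hi
          have h2 : i = v := congrArg Prod.snd hi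
          refine Finset.mem_filter.mpr ⟨Finset.mem_product.mpr
            ⟨Finset.mem_univ _, Finset.mem_univ _⟩, ?_⟩
          show u = v
          exact h1.symm.trans h2
      rw [← Finset.sum_product'
        (f := fun i j => (ρseq n * (embedAt n A' i * embedAt n A' j)).trace)]
      rw [← Finset.sum_filter_add_sum_filter_not (Finset.univ ×ˢ Finset.univ)
        (fun p : Fin n × Fin n => p.1 = p.2)]
      rw [hd, ← hod]
      rw [Finset.sum_image (by intro x _ y _ h; exact congrArg Prod.fst h)]
    rw [hsplit]
    refine le_trans (norm_add_le _ _) ?_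
    have hb1 : ‖∑ i, (ρseq n * (embedAt n A' i * embedAt n A' i)).trace‖
        ≤ ((d:ℝ)^2 * K2) * S1 n + n * c1 := by
      refine le_trans (norm_sum_le _ _) ?_
      refine le_trans (Finset.sum_le_sum fun i _ => hdiag n i) ?_
      rw [Finset.sum_add_distrib, Finset.sum_const, Finset.card_univ, Fintype.card_fin,
        nsmul_eq_mul]
      have hrw : S1 n = ∑ i : Fin n, traceNorm (marginal (ρseq n) {i} - tpowOn γ {i}) := by
        simp only [hS1]
        exact sum_powersetCard_one _
      have : ∑ i : Fin n, (d:ℝ)^2 * (traceNorm (marginal (ρseq n) {i} - tpowOn γ {i}) * K2)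
          = ((d:ℝ)^2 * K2) * S1 n := by
        rw [hrw, Finset.mul_sum]
        exact Finset.sum_congr rfl fun i _ => by ring
      rw [this]
    have hb2 : ‖∑ p ∈ (Finset.univ : Finset (Fin n)).offDiag,
          (ρseq n * (embedAt n A' p.1 * embedAt n A' p.2)).trace‖
        ≤ 2 * ((d:ℝ)^4 * K1^2) * S2 n := by
      refine le_trans (norm_sum_le _ _) ?_
      have hstep : ∑ p ∈ (Finset.univ : Finset (Fin n)).offDiag,
            ‖(ρseq n * (embedAt n A' p.1 * embedAt n A' p.2)).trace‖
          ≤ ∑ p ∈ (Finset.univ : Finset (Fin n)).offDiag,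
              (d:ℝ)^4 * K1^2 * traceNorm (marginal (ρseq n) {p.1, p.2} - tpowOn γ {p.1, p.2}) := by
        refine Finset.sum_le_sum fun p hp => ?_
        have hne : p.1 ≠ p.2 := (Finset.mem_offDiag.mp hp).2.2
        refine le_trans (hoff n p.1 p.2 hne) (le_of_eq ?_)
        ring
      refine le_trans hstep (le_of_eq ?_)
      have hrw2 : S2 n = ∑ I ∈ Finset.powersetCard 2 (Finset.univ : Finset (Fin n)),
          traceNorm (marginal (ρseq n) I - tpowOn γ I) := by simp only [hS2]
      rw [sum_offDiag_eq (n := n) (fun I =>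
        (d:ℝ)^4 * K1^2 * traceNorm (marginal (ρseq n) I - tpowOn γ I))]
      rw [← Finset.mul_sum, ← hrw2]
      ring
    calc ‖∑ i, (ρseq n * (embedAt n A' i * embedAt n A' i)).trace‖
          + ‖∑ p ∈ (Finset.univ : Finset (Fin n)).offDiag,
              (ρseq n * (embedAt n A' p.1 * embedAt n A' p.2)).trace‖
        ≤ (((d:ℝ)^2 * K2) * S1 n + n * c1) + 2 * ((d:ℝ)^4 * K1^2) * S2 n :=
          add_le_add hb1 hb2
      _ = ((d:ℝ)^2 * K2) * S1 n + n * c1 + 2 * ((d:ℝ)^4 * K1^2) * S2 n := by ring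
  -- limit of the upper bound
  have hq1 : Tendsto (fun n : ℕ => S1 n / (n.choose 1 : ℝ)) atTop (nhds 0) :=
    hwaiid 1 one_pos
  have hq2 : Tendsto (fun n : ℕ => S2 n / (n.choose 2 : ℝ)) atTop (nhds 0) :=
    hwaiid 2 two_pos
  have hg : Tendsto (fun n : ℕ => ((d:ℝ)^2 * K2) * ((n:ℝ)⁻¹ * (S1 n / (n.choose 1 : ℝ)))
      + c1 * (n:ℝ)⁻¹ + (2 * ((d:ℝ)^4 * K1^2)) * (S2 n / (n.choose 2 : ℝ)))
      atTop (nhds 0) := by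
    have t1 : Tendsto (fun n : ℕ => (n:ℝ)⁻¹ * (S1 n / (n.choose 1 : ℝ))) atTop (nhds 0) := by
      have := tendsto_inv_atTop_nhds_zero_nat.mul hq1
      simpa using this
    have t2 : Tendsto (fun n : ℕ => c1 * (n:ℝ)⁻¹) atTop (nhds 0) := by
      have := tendsto_inv_atTop_nhds_zero_nat.const_mul c1
      simpa using this
    have t3 := hq2.const_mul (2 * ((d:ℝ)^4 * K1^2))
    have t4 := t1.const_mul ((d:ℝ)^2 * K2)
    have := (t4.add t2).add t3
    simpa using this
  -- squeeze
  refine squeeze_zero' (Filter.Eventually.of_forall fun n => norm_nonneg _) ?_ hg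
  rw [Filter.eventually_atTop]
  refine ⟨2, fun n hn => ?_⟩
  have hn0 : n ≠ 0 := by omega
  refine le_trans (hmaster n hn0) ?_
  have hchoose1 : (n.choose 1 : ℝ) = (n : ℝ) := by rw [Nat.choose_one_right]
  have hn2pos : (0:ℝ) < (n:ℝ)^2 := by positivity
  have e1 : ((n:ℝ)^2)⁻¹ * (((d:ℝ)^2 * K2) * S1 n)
      = ((d:ℝ)^2 * K2) * ((n:ℝ)⁻¹ * (S1 n / (n.choose 1 : ℝ))) := by
    rw [hchoose1, div_eq_mul_inv, sq, mul_inv]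
    ring
  have e2 : ((n:ℝ)^2)⁻¹ * ((n:ℝ) * c1) = c1 * (n:ℝ)⁻¹ := by
    have : (n:ℝ) ≠ 0 := Nat.cast_ne_zero.mpr hn0
    field_simp
  have e3 : ((n:ℝ)^2)⁻¹ * (2 * ((d:ℝ)^4 * K1^2) * S2 n)
      ≤ (2 * ((d:ℝ)^4 * K1^2)) * (S2 n / (n.choose 2 : ℝ)) := by
    have hcpos : (0:ℝ) < (n.choose 2 : ℝ) := by
      have := Nat.choose_pos (show 2 ≤ n from hn)
      exact_mod_cast this
    have hcle : (n.choose 2 : ℝ) ≤ (n:ℝ)^2 := by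
      have h1 : n.choose 2 ≤ n * n := by
        calc n.choose 2 = n * (n-1) / 2 := Nat.choose_two_right n
          _ ≤ n * (n - 1) := Nat.div_le_self _ _
          _ ≤ n * n := Nat.mul_le_mul_left n (Nat.sub_le n 1)
      calc (n.choose 2 : ℝ) ≤ (n:ℝ) * (n:ℝ) := by exact_mod_cast h1
        _ = (n:ℝ)^2 := (sq (n:ℝ)).symm
    have hstep : ((n:ℝ)^2)⁻¹ * S2 n ≤ S2 n / (n.choose 2 : ℝ) := by
      rw [div_eq_mul_inv, mul_comm (((n:ℝ)^2)⁻¹)]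
      exact mul_le_mul_of_nonneg_left (by
        apply inv_anti₀ hcpos hcle) (hS2nn n)
    calc ((n:ℝ)^2)⁻¹ * (2 * ((d:ℝ)^4 * K1^2) * S2 n)
        = (2 * ((d:ℝ)^4 * K1^2)) * (((n:ℝ)^2)⁻¹ * S2 n) := by ring
      _ ≤ (2 * ((d:ℝ)^4 * K1^2)) * (S2 n / (n.choose 2 : ℝ)) := by
          refine mul_le_mul_of_nonneg_left hstep ?_
          have h4 : (0:ℝ) ≤ (d:ℝ)^4 := pow_nonneg (Nat.cast_nonneg d) 4
          nlinarith [sq_nonneg K1, mul_nonneg h4 (sq_nonneg K1)]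
  calc ((n:ℝ)^2)⁻¹ * (((d:ℝ)^2 * K2) * S1 n + n * c1 + 2 * ((d:ℝ)^4 * K1^2) * S2 n)
      = ((n:ℝ)^2)⁻¹ * (((d:ℝ)^2 * K2) * S1 n) + ((n:ℝ)^2)⁻¹ * ((n:ℝ) * c1)
        + ((n:ℝ)^2)⁻¹ * (2 * ((d:ℝ)^4 * K1^2) * S2 n) := by ring
    _ ≤ ((d:ℝ)^2 * K2) * ((n:ℝ)⁻¹ * (S1 n / (n.choose 1 : ℝ))) + c1 * (n:ℝ)⁻¹
        + (2 * ((d:ℝ)^4 * K1^2)) * (S2 n / (n.choose 2 : ℝ)) := by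
        rw [e1, e2]
        exact add_le_add_right e3 _

end SH
namespace SH

lemma smul_isHermitian' {ι : Type*} [Fintype ι] [DecidableEq ι] {c : ℂ} (hc : star c = c)
    {X : Matrix ι ι ℂ} (hX : X.IsHermitian) : (c • X).IsHermitian := by
  show _ᴴ = _
  rw [Matrix.conjTranspose_smul, hc, hX.eq]

lemma real_smul_isHermitian {d : ℕ} (r : ℝ) {X : Mat d} (hX : X.IsHermitian) :
    (r • X).IsHermitian := by
  show _ᴴ = _
  ext x y
  rw [Matrix.conjTranspose_apply, Matrix.smul_apply, Matrix.smul_apply, star_smul,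
    star_trivial]
  congr 1
  rw [← Matrix.conjTranspose_apply, hX.eq]

/-- the key convergence statement, for a family of commuting observables -/
lemma main_squeeze {d : ℕ} (M : ℕ) (obs : Fin M → Mat d) (γ : Mat d)
    (hγh : γ.IsHermitian) (hγt : γ.trace = 1)
    (hobsH : ∀ ℓ, (obs ℓ).IsHermitian) (hobsC : ∀ ℓ ℓ', Commute (obs ℓ) (obs ℓ'))
    (ρseq : ∀ n, MatN d n) (hdens : ∀ n, IsDensity (ρseq n))
    (hwaiid : WeaklyAlmostIID γ ρseq) (δ : ℝ) (hδ : 0 < δ) :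
    Tendsto (fun n => Matrix.trace (ρseq n *
        (List.ofFn (fun ℓ : Fin M => specProj (fun t => |t| ≤ δ)
          (avgObs n (obs ℓ) - Matrix.trace (γ * obs ℓ) • 1))).prod))
      atTop (nhds 1) := by
  classical
  have hareal : ∀ ℓ, star ((γ * obs ℓ).trace) = (γ * obs ℓ).trace := by
    intro ℓ
    rw [SH.trace_mul_herm_real hγh (hobsH ℓ), Complex.star_def, Complex.conj_ofReal]
  have hMh : ∀ (n : ℕ) (ℓ : Fin M),
      (avgObs n (obs ℓ) - (γ * obs ℓ).trace • (1 : MatN d n)).IsHermitian := fun n ℓ =>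
    SH.avgObs_sub_isHermitian (hobsH ℓ) (hareal ℓ)
  have hMcomm : ∀ (n : ℕ) (ℓ ℓ' : Fin M),
      Commute (avgObs n (obs ℓ) - (γ * obs ℓ).trace • (1 : MatN d n))
        (avgObs n (obs ℓ') - (γ * obs ℓ').trace • (1 : MatN d n)) := fun n ℓ ℓ' =>
    SH.commute_avg_sub (hobsC ℓ ℓ') _ _
  have hPh : ∀ (n : ℕ) (ℓ : Fin M), (specProj (fun t => |t| ≤ δ)
      (avgObs n (obs ℓ) - (γ * obs ℓ).trace • (1 : MatN d n))).IsHermitian := fun n ℓ =>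
    SH.specProj_isHermitian (hMh n ℓ) _
  have hPi : ∀ (n : ℕ) (ℓ : Fin M), specProj (fun t => |t| ≤ δ)
        (avgObs n (obs ℓ) - (γ * obs ℓ).trace • (1 : MatN d n))
      * specProj (fun t => |t| ≤ δ)
        (avgObs n (obs ℓ) - (γ * obs ℓ).trace • (1 : MatN d n))
      = specProj (fun t => |t| ≤ δ)
        (avgObs n (obs ℓ) - (γ * obs ℓ).trace • (1 : MatN d n)) := fun n ℓ =>
    SH.specProj_idem (hMh n ℓ) _
  have hPcomm : ∀ (n : ℕ) (ℓ ℓ' : Fin M), Commute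
      (specProj (fun t => |t| ≤ δ) (avgObs n (obs ℓ) - (γ * obs ℓ).trace • (1 : MatN d n)))
      (specProj (fun t => |t| ≤ δ)
        (avgObs n (obs ℓ') - (γ * obs ℓ').trace • (1 : MatN d n))) := by
    intro n ℓ ℓ'
    have h1 := SH.commute_specProj (hMh n ℓ') (hMcomm n ℓ' ℓ) (fun t => |t| ≤ δ)
    exact SH.commute_specProj (hMh n ℓ) h1.symm (fun t => |t| ≤ δ)
  have hmem : ∀ n, ∀ P ∈ List.ofFn (fun ℓ : Fin M => specProj (fun t => |t| ≤ δ)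
      (avgObs n (obs ℓ) - (γ * obs ℓ).trace • (1 : MatN d n))),
      P.IsHermitian ∧ P * P = P := by
    intro n P hP
    obtain ⟨ℓ, rfl⟩ := List.mem_ofFn.mp hP
    exact ⟨hPh n ℓ, hPi n ℓ⟩
  have hpw : ∀ n, (List.ofFn (fun ℓ : Fin M => specProj (fun t => |t| ≤ δ)
      (avgObs n (obs ℓ) - (γ * obs ℓ).trace • (1 : MatN d n)))).Pairwise Commute := by
    intro n
    exact List.pairwise_ofFn.mpr fun i j _ => hPcomm n i j
  have hWhi : ∀ n, ((List.ofFn (fun ℓ : Fin M => specProj (fun t => |t| ≤ δ)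
        (avgObs n (obs ℓ) - (γ * obs ℓ).trace • (1 : MatN d n)))).prod).IsHermitian
      ∧ (List.ofFn (fun ℓ : Fin M => specProj (fun t => |t| ≤ δ)
        (avgObs n (obs ℓ) - (γ * obs ℓ).trace • (1 : MatN d n)))).prod
        * (List.ofFn (fun ℓ : Fin M => specProj (fun t => |t| ≤ δ)
        (avgObs n (obs ℓ) - (γ * obs ℓ).trace • (1 : MatN d n)))).prod
      = (List.ofFn (fun ℓ : Fin M => specProj (fun t => |t| ≤ δ)
        (avgObs n (obs ℓ) - (γ * obs ℓ).trace • (1 : MatN d n)))).prod := fun n =>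
    SH.listprod_herm_idem _ (hmem n) (hpw n)
  have htr : ∀ n, (ρseq n * (List.ofFn (fun ℓ : Fin M => specProj (fun t => |t| ≤ δ)
        (avgObs n (obs ℓ) - (γ * obs ℓ).trace • (1 : MatN d n)))).prod).trace
      = ((((ρseq n * (List.ofFn (fun ℓ : Fin M => specProj (fun t => |t| ≤ δ)
        (avgObs n (obs ℓ) - (γ * obs ℓ).trace • (1 : MatN d n)))).prod).trace).re : ℝ) : ℂ) :=
    fun n => SH.trace_mul_herm_real (hdens n).1.1 (hWhi n).1
  have hub : ∀ n, ((ρseq n * (List.ofFn (fun ℓ : Fin M => specProj (fun t => |t| ≤ δ)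
      (avgObs n (obs ℓ) - (γ * obs ℓ).trace • (1 : MatN d n)))).prod).trace).re ≤ 1 := by
    intro n
    have := SH.trace_proj_le (hdens n).1 (hWhi n).1 (hWhi n).2
    rw [(hdens n).2] at this
    simpa using this
  have hlb : ∀ n, 1 - ∑ ℓ : Fin M, ((ρseq n * ((1 : MatN d n) - specProj (fun t => |t| ≤ δ)
        (avgObs n (obs ℓ) - (γ * obs ℓ).trace • (1 : MatN d n)))).trace).re
      ≤ ((ρseq n * (List.ofFn (fun ℓ : Fin M => specProj (fun t => |t| ≤ δ)
        (avgObs n (obs ℓ) - (γ * obs ℓ).trace • (1 : MatN d n)))).prod).trace).re := by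
    intro n
    have := SH.union_bound (hdens n).1 _ (hmem n) (hpw n)
    rw [(hdens n).2] at this
    rw [List.map_ofFn, List.sum_ofFn] at this
    simpa using this
  have hcheb : ∀ (n : ℕ) (ℓ : Fin M), ((ρseq n * ((1 : MatN d n) - specProj (fun t => |t| ≤ δ)
        (avgObs n (obs ℓ) - (γ * obs ℓ).trace • (1 : MatN d n)))).trace).re
      ≤ (δ^2)⁻¹ * ‖(ρseq n
          * ((avgObs n (obs ℓ) - (γ * obs ℓ).trace • (1 : MatN d n))
            * (avgObs n (obs ℓ) - (γ * obs ℓ).trace • (1 : MatN d n)))).trace‖ := by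
    intro n ℓ
    have hpsd := SH.cheb_psd (hMh n ℓ) hδ
    have h0 := SH.trace_mul_psd_re_nonneg (hdens n).1 hpsd
    have hsplit : ρseq n * ((((δ ^ 2)⁻¹ : ℝ) : ℂ)
          • ((avgObs n (obs ℓ) - (γ * obs ℓ).trace • (1 : MatN d n))
            * (avgObs n (obs ℓ) - (γ * obs ℓ).trace • (1 : MatN d n)))
          + specProj (fun t => |t| ≤ δ)
            (avgObs n (obs ℓ) - (γ * obs ℓ).trace • (1 : MatN d n)) - (1 : MatN d n))
        = (((δ ^ 2)⁻¹ : ℝ) : ℂ) • (ρseq n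
            * ((avgObs n (obs ℓ) - (γ * obs ℓ).trace • (1 : MatN d n))
              * (avgObs n (obs ℓ) - (γ * obs ℓ).trace • (1 : MatN d n))))
          - ρseq n * ((1 : MatN d n) - specProj (fun t => |t| ≤ δ)
            (avgObs n (obs ℓ) - (γ * obs ℓ).trace • (1 : MatN d n))) := by
      rw [Matrix.mul_sub, Matrix.mul_add, Matrix.mul_one, mul_smul_comm]
      noncomm_ring
    rw [hsplit, Matrix.trace_sub, Complex.sub_re, Matrix.trace_smul] at h0
    have hre : ((((δ ^ 2)⁻¹ : ℝ) : ℂ) • (ρseq n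
          * ((avgObs n (obs ℓ) - (γ * obs ℓ).trace • (1 : MatN d n))
            * (avgObs n (obs ℓ) - (γ * obs ℓ).trace • (1 : MatN d n)))).trace).re
        = (δ^2)⁻¹ * ((ρseq n
          * ((avgObs n (obs ℓ) - (γ * obs ℓ).trace • (1 : MatN d n))
            * (avgObs n (obs ℓ) - (γ * obs ℓ).trace • (1 : MatN d n)))).trace).re := by
      rw [smul_eq_mul, Complex.mul_re, Complex.ofReal_re, Complex.ofReal_im]
      ring
    rw [hre] at h0
    have hre_le := Complex.re_le_norm ((ρseq n
          * ((avgObs n (obs ℓ) - (γ * obs ℓ).trace • (1 : MatN d n))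
            * (avgObs n (obs ℓ) - (γ * obs ℓ).trace • (1 : MatN d n)))).trace)
    have hc : (0:ℝ) ≤ (δ^2)⁻¹ := by positivity
    nlinarith [mul_le_mul_of_nonneg_left hre_le hc]
  have hvar : ∀ ℓ : Fin M, Tendsto (fun n => ‖(ρseq n
      * ((avgObs n (obs ℓ) - (γ * obs ℓ).trace • (1 : MatN d n))
        * (avgObs n (obs ℓ) - (γ * obs ℓ).trace • (1 : MatN d n)))).trace‖)
      atTop (nhds 0) := fun ℓ =>
    SH.main_var γ hγh hγt ρseq hdens hwaiid (obs ℓ)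
  have hrlim : Tendsto (fun n => ((ρseq n * (List.ofFn (fun ℓ : Fin M =>
      specProj (fun t => |t| ≤ δ)
        (avgObs n (obs ℓ) - (γ * obs ℓ).trace • (1 : MatN d n)))).prod).trace).re)
      atTop (nhds 1) := by
    have hL : Tendsto (fun n => 1 - ∑ ℓ : Fin M,
        (δ^2)⁻¹ * ‖(ρseq n
          * ((avgObs n (obs ℓ) - (γ * obs ℓ).trace • (1 : MatN d n))
            * (avgObs n (obs ℓ) - (γ * obs ℓ).trace • (1 : MatN d n)))).trace‖)
        atTop (nhds 1) := by
      have hsum0 : Tendsto (fun n => ∑ ℓ : Fin M,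
          (δ^2)⁻¹ * ‖(ρseq n
            * ((avgObs n (obs ℓ) - (γ * obs ℓ).trace • (1 : MatN d n))
              * (avgObs n (obs ℓ) - (γ * obs ℓ).trace • (1 : MatN d n)))).trace‖)
          atTop (nhds 0) := by
        have := tendsto_finset_sum (Finset.univ : Finset (Fin M))
          (fun ℓ _ => (hvar ℓ).const_mul ((δ^2)⁻¹))
        simpa using this
      have := (tendsto_const_nhds (x := (1:ℝ)) (f := atTop (α := ℕ))).sub hsum0
      simpa using this
    refine tendsto_of_tendsto_of_tendsto_of_le_of_le hL tendsto_const_nhds ?_ hub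
    intro n
    refine le_trans ?_ (hlb n)
    have hs := Finset.sum_le_sum (fun ℓ (_ : ℓ ∈ (Finset.univ : Finset (Fin M))) =>
      hcheb n ℓ)
    linarith
  have hfun : (fun n => Matrix.trace (ρseq n *
      (List.ofFn (fun ℓ : Fin M => specProj (fun t => |t| ≤ δ)
        (avgObs n (obs ℓ) - Matrix.trace (γ * obs ℓ) • 1))).prod))
      = fun n => ((((ρseq n * (List.ofFn (fun ℓ : Fin M => specProj (fun t => |t| ≤ δ)
        (avgObs n (obs ℓ) - (γ * obs ℓ).trace • (1 : MatN d n)))).prod).trace).re : ℝ) : ℂ) :=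
    funext fun n => htr n
  rw [hfun]
  have := (Complex.continuous_ofReal.tendsto 1).comp hrlim
  rw [Complex.ofReal_one] at this
  exact this

end SH

set_option maxHeartbeats 1000000 in
theorem stmt_12 {d : ℕ} (m : ℕ) (H : Mat d) (Q : Fin m → Mat d)
    (hH : H.IsHermitian) (hQ : ∀ ℓ, (Q ℓ).IsHermitian)
    (hHQ : ∀ ℓ, Commute H (Q ℓ)) (hQQ : ∀ ℓ ℓ', Commute (Q ℓ) (Q ℓ'))
    (lam0 : ℝ) (lam : Fin m → ℝ) (γ : Mat d)
    (hγ : γ = (Matrix.trace (mfun Real.exp (-(lam0 • H + ∑ ℓ, lam ℓ • Q ℓ))))⁻¹ •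
        mfun Real.exp (-(lam0 • H + ∑ ℓ, lam ℓ • Q ℓ)))
    (ρseq : ∀ n, MatN d n) (hdens : ∀ n, IsDensity (ρseq n))
    (hwaiid : WeaklyAlmostIID γ ρseq) (δ : ℝ) (hδ : 0 < δ) :
    Tendsto (fun n => Matrix.trace (ρseq n *
        (specProj (fun t => |t| ≤ δ) (avgObs n H - Matrix.trace (γ * H) • 1) *
          (List.ofFn (fun ℓ => specProj (fun t => |t| ≤ δ)
            (avgObs n (Q ℓ) - Matrix.trace (γ * Q ℓ) • 1))).prod)))
      atTop (nhds 1) := by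
  classical
  -- dispose of the degenerate case d = 0
  rcases Nat.eq_zero_or_pos d with hd0 | hdpos
  · exfalso
    subst hd0
    have h := (hdens 1).2
    haveI : IsEmpty (Fin 1 → Fin 0) := ⟨fun f => (f 0).elim0⟩
    rw [show (ρseq 1).trace = 0 by simp [Matrix.trace]] at h
    exact one_ne_zero h.symm
  -- properties of γ
  have hsum : (∑ ℓ, lam ℓ • Q ℓ).IsHermitian := by
    show _ᴴ = _
    rw [Matrix.conjTranspose_sum]
    exact Finset.sum_congr rfl fun ℓ _ => (SH.real_smul_isHermitian _ (hQ ℓ)).eq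
  have hNh : (-(lam0 • H + ∑ ℓ, lam ℓ • Q ℓ)).IsHermitian :=
    ((SH.real_smul_isHermitian lam0 hH).add hsum).neg
  have hE : mfun Real.exp (-(lam0 • H + ∑ ℓ, lam ℓ • Q ℓ))
      = SH.fn (fun t => ((Real.exp t : ℝ) : ℂ)) hNh := SH.mfun_eq_fn hNh _
  have htE : (mfun Real.exp (-(lam0 • H + ∑ ℓ, lam ℓ • Q ℓ))).trace
      = ((∑ i, Real.exp (hNh.eigenvalues i) : ℝ) : ℂ) := by
    rw [hE, SH.fn_trace, Complex.ofReal_sum]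
  have htpos : (0:ℝ) < ∑ i, Real.exp (hNh.eigenvalues i) := by
    have : Nonempty (Fin d) := ⟨⟨0, hdpos⟩⟩
    exact Finset.sum_pos (fun i _ => Real.exp_pos _) Finset.univ_nonempty
  have hγh : γ.IsHermitian := by
    rw [hγ, htE, ← Complex.ofReal_inv]
    exact SH.smul_isHermitian' (by rw [Complex.star_def, Complex.conj_ofReal])
      (hE ▸ SH.fn_isHermitian hNh fun t => by rw [Complex.star_def, Complex.conj_ofReal])
  have hγt : γ.trace = 1 := by
    rw [hγ, Matrix.trace_smul, htE, smul_eq_mul]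
    rw [inv_mul_cancel₀]
    exact Complex.ofReal_ne_zero.mpr htpos.ne'
  -- uniform treatment of the m+1 observables
  have hobsH : ∀ ℓ, ((Fin.cons H Q : Fin (m+1) → Mat d) ℓ).IsHermitian := by
    intro ℓ
    refine Fin.cases ?_ ?_ ℓ
    · exact hH
    · exact hQ
  have hobsC : ∀ ℓ ℓ', Commute ((Fin.cons H Q : Fin (m+1) → Mat d) ℓ)
      ((Fin.cons H Q : Fin (m+1) → Mat d) ℓ') := by
    intro ℓ ℓ'
    refine Fin.cases ?_ ?_ ℓ <;> [skip; intro i] <;> refine Fin.cases ?_ ?_ ℓ'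
    · exact Commute.refl H
    · intro j; exact hHQ j
    · exact (hHQ i).symm
    · intro j; exact hQQ i j
  have hmain := SH.main_squeeze (m + 1) (Fin.cons H Q) γ hγh hγt hobsH hobsC
    ρseq hdens hwaiid δ hδ
  have hfun : ∀ n : ℕ, (List.ofFn (fun ℓ : Fin (m+1) => specProj (fun t => |t| ≤ δ)
        (avgObs n ((Fin.cons H Q : Fin (m+1) → Mat d) ℓ)
          - Matrix.trace (γ * (Fin.cons H Q : Fin (m+1) → Mat d) ℓ) • 1))).prod
      = specProj (fun t => |t| ≤ δ) (avgObs n H - Matrix.trace (γ * H) • 1) *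
          (List.ofFn (fun ℓ => specProj (fun t => |t| ≤ δ)
            (avgObs n (Q ℓ) - Matrix.trace (γ * Q ℓ) • 1))).prod := by
    intro n
    rw [List.ofFn_succ, List.prod_cons]
    simp only [Fin.cons_zero, Fin.cons_succ]
  refine hmain.congr fun n => ?_
  rw [hfun n]
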